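/- arXiv:0803.1067 — 2 statements merged into one kernel-verified Lean document; each statement's English description precedes it below -/
import Mathlib

section
/- Define f(x) = (1/(c+v)) e^{-μ x̄} Σ_{k=1}^∞ (μ^{kβ} x̄^{kβ−1}/Γ(kβ)) [P(kα, λx*) − P(kα+α, λx*)] with x̄ = (ct−x)/(c+v), x* = (vt+x)/(c+v). Then as x ↑ ct, f(x) → +∞ if 0 < β < 1; f(x) → (μ/(c+v))[P(α, λt) − P(2α, λt)] if β = 1; and f(x) → 0 if β > 1. -/
open Real Filter Topology MeasureTheory Set intervalIntegral

/-- Regularized lower incomplete gamma function `P(a,u)`. -/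
noncomputable def regGamma (a u : ℝ) : ℝ :=
  (1 / Real.Gamma a) * ∫ s in (0 : ℝ)..u, s ^ (a - 1) * Real.exp (-s)

lemma gi_integrableOn {a : ℝ} (ha : 0 < a) :
    IntegrableOn (fun s : ℝ => s ^ (a - 1) * Real.exp (-s)) (Ioi 0) :=
  (Real.GammaIntegral_convergent ha).congr_fun (fun s _ => mul_comm _ _) measurableSet_Ioi

lemma Gamma_eq_my {a : ℝ} (ha : 0 < a) :
    Real.Gamma a = ∫ s in Ioi (0:ℝ), s ^ (a - 1) * Real.exp (-s) := by
  rw [Real.Gamma_eq_integral ha]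
  exact setIntegral_congr_fun measurableSet_Ioi fun s _ => mul_comm _ _

lemma gi_nonneg {a : ℝ} (s : ℝ) (hs : 0 ≤ s) : 0 ≤ s ^ (a - 1) * Real.exp (-s) :=
  mul_nonneg (Real.rpow_nonneg hs _) (Real.exp_pos _).le

lemma regGamma_eq_set {a u : ℝ} (hu : 0 ≤ u) :
    regGamma a u = (1 / Real.Gamma a) * ∫ s in Ioc (0:ℝ) u, s ^ (a - 1) * Real.exp (-s) := by
  rw [regGamma, intervalIntegral.integral_of_le hu]

lemma regGamma_nonneg {a u : ℝ} (ha : 0 < a) (hu : 0 ≤ u) : 0 ≤ regGamma a u := by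
  rw [regGamma_eq_set hu]
  have := Real.Gamma_pos_of_pos ha
  refine mul_nonneg (by positivity) ?_
  exact setIntegral_nonneg measurableSet_Ioc fun s hs => gi_nonneg s hs.1.le

lemma regGamma_le_one {a u : ℝ} (ha : 0 < a) (hu : 0 ≤ u) : regGamma a u ≤ 1 := by
  have hΓ := Real.Gamma_pos_of_pos ha
  rw [regGamma_eq_set hu]
  have h1 : (∫ s in Ioc (0:ℝ) u, s ^ (a - 1) * Real.exp (-s)) ≤ Real.Gamma a := by
    rw [Gamma_eq_my ha]
    refine setIntegral_mono_set (gi_integrableOn ha) ?_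
      (HasSubset.Subset.eventuallyLE Ioc_subset_Ioi_self)
    filter_upwards [ae_restrict_mem measurableSet_Ioi] with s hs
    exact gi_nonneg s (le_of_lt hs)
  calc (1 / Real.Gamma a) * ∫ s in Ioc (0:ℝ) u, s ^ (a - 1) * Real.exp (-s)
      ≤ (1 / Real.Gamma a) * Real.Gamma a := by
        exact mul_le_mul_of_nonneg_left h1 (by positivity)
    _ = 1 := by field_simp

lemma Gamma_lb_aux {a : ℝ} (ha : 1 ≤ a) :
    Real.exp (-3) * (2:ℝ) ^ (a - 1) ≤ Real.Gamma a := by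
  have ha0 : (0:ℝ) < a := by linarith
  rw [Gamma_eq_my ha0]
  have h23 : (∫ s in Ioc (2:ℝ) 3, s ^ (a - 1) * Real.exp (-s))
      ≤ ∫ s in Ioi (0:ℝ), s ^ (a - 1) * Real.exp (-s) := by
    refine setIntegral_mono_set (gi_integrableOn ha0) ?_
      (HasSubset.Subset.eventuallyLE (fun s hs => lt_trans (by norm_num) hs.1))
    filter_upwards [ae_restrict_mem measurableSet_Ioi] with s hs
    exact gi_nonneg s hs.le
  refine le_trans ?_ h23
  have hconst : ∀ s ∈ Ioc (2:ℝ) 3, Real.exp (-3) * (2:ℝ) ^ (a - 1) ≤ s ^ (a - 1) * Real.exp (-s) := by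
    intro s hs
    rw [mul_comm]
    refine mul_le_mul (Real.rpow_le_rpow (by norm_num) hs.1.le (by linarith))
      (Real.exp_le_exp.2 (by linarith [hs.2])) (Real.exp_pos _).le (Real.rpow_nonneg (by linarith [hs.1]) _)
  have hInt : IntegrableOn (fun s : ℝ => s ^ (a - 1) * Real.exp (-s)) (Ioc 2 3) :=
    (gi_integrableOn ha0).mono_set (fun s hs => lt_trans (by norm_num) hs.1)
  have := MeasureTheory.setIntegral_ge_of_const_le (c := Real.exp (-3) * (2:ℝ) ^ (a - 1))
    measurableSet_Ioc (by simp) hconst hInt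
  calc Real.exp (-3) * (2:ℝ) ^ (a - 1)
      = Real.exp (-3) * (2:ℝ) ^ (a - 1) * (volume (Ioc (2:ℝ) 3)).toReal := by
        rw [Real.volume_Ioc]; norm_num
    _ ≤ _ := by rw [smul_eq_mul, mul_comm] at this; exact this

lemma Gamma_lb {a : ℝ} (ha : 0 < a) :
    Real.exp (-3) * (2:ℝ) ^ (a - 1) ≤ Real.Gamma a := by
  rcases le_or_gt 1 a with h | h
  · exact Gamma_lb_aux h
  · have h1 : Real.Gamma (a + 1) = a * Real.Gamma a := Real.Gamma_add_one ha.ne'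
    have h2 : Real.exp (-3) * (2:ℝ) ^ ((a+1) - 1) ≤ Real.Gamma (a+1) := Gamma_lb_aux (by linarith)
    have hΓ : 0 < Real.Gamma a := Real.Gamma_pos_of_pos ha
    have h3 : Real.Gamma (a + 1) ≤ Real.Gamma a := by
      rw [h1]; nlinarith
    refine le_trans ?_ (h2.trans h3)
    have : ((2:ℝ) ^ (a - 1)) ≤ (2:ℝ) ^ ((a+1) - 1) := by
      apply Real.rpow_le_rpow_left_iff (by norm_num : (1:ℝ) < 2) |>.2; linarith
    nlinarith [Real.exp_pos (-3 : ℝ)]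

lemma one_div_Gamma_le {a : ℝ} (ha : 0 < a) :
    1 / Real.Gamma a ≤ Real.exp 3 * (2:ℝ) ^ (1 - a) := by
  have hΓ : 0 < Real.Gamma a := Real.Gamma_pos_of_pos ha
  have hlb := Gamma_lb ha
  have hpos : (0:ℝ) < Real.exp (-3) * (2:ℝ) ^ (a - 1) := by positivity
  have := one_div_le_one_div_of_le hpos hlb
  refine this.trans ?_
  rw [one_div, mul_inv, ← Real.exp_neg, neg_neg, ← Real.rpow_neg (by norm_num : (0:ℝ) ≤ 2), neg_sub]

lemma regGamma_lt {α w : ℝ} (hα : 0 < α) (hw : 0 < w) :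
    regGamma (α + α) w < regGamma α w := by
  set Γ1 := Real.Gamma α with hΓ1
  set Γ2 := Real.Gamma (α + α) with hΓ2
  have hΓ1p : 0 < Γ1 := Real.Gamma_pos_of_pos hα
  have hαα : (0:ℝ) < α + α := by linarith
  have hΓ2p : 0 < Γ2 := Real.Gamma_pos_of_pos hαα
  set g : ℝ → ℝ := fun s => Γ2 * (s ^ (α - 1) * Real.exp (-s)) - Γ1 * (s ^ (α + α - 1) * Real.exp (-s)) with hg
  have hgInt : IntegrableOn g (Ioi 0) :=
    ((gi_integrableOn hα).const_mul Γ2).sub ((gi_integrableOn hαα).const_mul Γ1)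
  have htot : (∫ s in Ioi (0:ℝ), g s) = 0 := by
    rw [hg]
    rw [integral_sub ((gi_integrableOn hα).const_mul Γ2) ((gi_integrableOn hαα).const_mul Γ1),
      MeasureTheory.integral_const_mul, MeasureTheory.integral_const_mul,
      ← Gamma_eq_my hα, ← Gamma_eq_my hαα]
    ring
  set w₀ : ℝ := (Γ2 / Γ1) ^ (1/α) with hw₀
  have hw₀p : 0 < w₀ := Real.rpow_pos_of_pos (by positivity) _
  have hw₀α : w₀ ^ α = Γ2 / Γ1 := by
    rw [hw₀, ← Real.rpow_mul (by positivity), one_div, inv_mul_cancel₀ hα.ne', Real.rpow_one]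
  have hgpos : ∀ s : ℝ, 0 < s → s < w₀ → 0 < g s := by
    intro s hs hsw
    have h1 : s ^ α < w₀ ^ α := Real.rpow_lt_rpow hs.le hsw hα
    rw [hw₀α] at h1
    have h2 : Γ1 * s ^ α < Γ2 := by
      rw [lt_div_iff₀ hΓ1p] at h1; linarith [h1]
    have hsplit : s ^ (α + α - 1) = s ^ (α - 1) * s ^ α := by
      rw [← Real.rpow_add hs]; ring_nf
    have hfac : 0 < s ^ (α - 1) * Real.exp (-s) := by positivity
    rw [hg]
    simp only
    rw [hsplit]
    nlinarith [mul_lt_mul_of_pos_right h2 hfac, hfac]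
  have hgneg : ∀ s : ℝ, w₀ < s → g s < 0 := by
    intro s hsw
    have hs : 0 < s := hw₀p.trans hsw
    have h1 : w₀ ^ α < s ^ α := Real.rpow_lt_rpow hw₀p.le hsw hα
    rw [hw₀α] at h1
    have h2 : Γ2 < Γ1 * s ^ α := by
      rw [div_lt_iff₀ hΓ1p] at h1; linarith [h1]
    have hsplit : s ^ (α + α - 1) = s ^ (α - 1) * s ^ α := by
      rw [← Real.rpow_add hs]; ring_nf
    have hfac : 0 < s ^ (α - 1) * Real.exp (-s) := by positivity
    rw [hg]; simp only; rw [hsplit]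
    nlinarith [mul_lt_mul_of_pos_right h2 hfac, hfac]
  have hkey : 0 < ∫ s in Ioc (0:ℝ) w, g s := by
    rcases le_or_gt w w₀ with hcase | hcase
    · rw [← intervalIntegral.integral_of_le hw.le]
      refine intervalIntegral_pos_of_pos_on ?_ ?_ hw
      · exact (intervalIntegrable_iff_integrableOn_Ioc_of_le hw.le).2
          (hgInt.mono_set Ioc_subset_Ioi_self)
      · intro s hs
        exact hgpos s hs.1 (lt_of_lt_of_le hs.2 hcase)
    · have hsplit : (∫ s in Ioi (0:ℝ), g s) = (∫ s in Ioc (0:ℝ) w, g s) + ∫ s in Ioi w, g s := by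
        rw [← Ioc_union_Ioi_eq_Ioi hw.le]
        rw [setIntegral_union (Ioc_disjoint_Ioi le_rfl) measurableSet_Ioi
          (hgInt.mono_set Ioc_subset_Ioi_self)
          (hgInt.mono_set (fun s hs => lt_trans hw hs))]
      have hIw : (∫ s in Ioc (0:ℝ) w, g s) = ∫ s in Ioi w, (-g s) := by
        rw [MeasureTheory.integral_neg]
        rw [htot] at hsplit
        linarith [hsplit]
      rw [hIw]
      have hmono : (∫ s in Ioc w (w+1), (-g s)) ≤ ∫ s in Ioi w, (-g s) := by
        refine setIntegral_mono_set ((hgInt.mono_set (fun s hs => lt_trans hw hs)).neg) ?_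
          (HasSubset.Subset.eventuallyLE Ioc_subset_Ioi_self)
        filter_upwards [ae_restrict_mem measurableSet_Ioi] with s hs
        exact neg_nonneg.2 (hgneg s (lt_trans hcase hs)).le
      refine lt_of_lt_of_le ?_ hmono
      rw [← intervalIntegral.integral_of_le (by linarith : w ≤ w + 1)]
      refine intervalIntegral_pos_of_pos_on ?_ ?_ (by linarith)
      · exact (intervalIntegrable_iff_integrableOn_Ioc_of_le (by linarith : w ≤ w+1)).2
          ((hgInt.mono_set (fun s hs => lt_trans hw hs.1)).neg)
      · intro s hs
        simp only [neg_pos]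
        exact hgneg s (lt_trans hcase hs.1)
  have h1 : regGamma α w = (1 / Γ1) * ∫ s in Ioc (0:ℝ) w, s ^ (α - 1) * Real.exp (-s) := regGamma_eq_set hw.le
  have h2 : regGamma (α+α) w = (1 / Γ2) * ∫ s in Ioc (0:ℝ) w, s ^ (α + α - 1) * Real.exp (-s) := regGamma_eq_set hw.le
  have hI : (∫ s in Ioc (0:ℝ) w, g s) =
      Γ2 * (∫ s in Ioc (0:ℝ) w, s ^ (α - 1) * Real.exp (-s))
      - Γ1 * ∫ s in Ioc (0:ℝ) w, s ^ (α + α - 1) * Real.exp (-s) := by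
    rw [hg]
    rw [integral_sub (((gi_integrableOn hα).mono_set Ioc_subset_Ioi_self).const_mul Γ2)
      (((gi_integrableOn hαα).mono_set Ioc_subset_Ioi_self).const_mul Γ1),
      MeasureTheory.integral_const_mul, MeasureTheory.integral_const_mul]
  rw [h1, h2]
  rw [hI] at hkey
  rw [div_mul_eq_mul_div, div_mul_eq_mul_div, div_lt_div_iff₀ hΓ2p hΓ1p]
  nlinarith [hkey]

lemma regGamma_continuousAt {a w : ℝ} (ha : 0 < a) (hw : 0 < w) :
    ContinuousAt (fun u => regGamma a u) w := by
  have h_int : IntervalIntegrable (fun s : ℝ => s ^ (a - 1) * Real.exp (-s)) volume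
      (min 0 (w/2)) (max 0 (w+1)) := by
    rw [min_eq_left (by linarith), max_eq_right (by linarith)]
    exact (intervalIntegrable_iff_integrableOn_Ioc_of_le (by linarith)).2
      ((gi_integrableOn ha).mono_set Ioc_subset_Ioi_self)
  have hc : ContinuousWithinAt (fun u => ∫ s in (0:ℝ)..u, s ^ (a - 1) * Real.exp (-s))
      (Icc (w/2) (w+1)) w :=
    intervalIntegral.continuousWithinAt_primitive (measure_singleton w) h_int
  have hnhds : Icc (w/2) (w+1) ∈ nhds w := Icc_mem_nhds (by linarith) (by linarith)
  exact continuousAt_const.mul (hc.continuousAt hnhds)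

noncomputable def fdTerm (l μ α β y u : ℝ) (k : ℕ) : ℝ :=
  μ ^ (((k : ℝ) + 1) * β) * y ^ (((k : ℝ) + 1) * β - 1) / Real.Gamma (((k : ℝ) + 1) * β) *
    (regGamma (((k : ℝ) + 1) * α) (l * u) - regGamma (((k : ℝ) + 1) * α + α) (l * u))

lemma fdTerm_zero {l μ α β y u : ℝ} :
    fdTerm l μ α β y u 0
      = μ ^ β * y ^ (β - 1) / Real.Gamma β * (regGamma α (l * u) - regGamma (α + α) (l * u)) := by
  simp [fdTerm]

lemma fdTerm_abs_le {l μ α β : ℝ} (hl : 0 < l) (hμ : 0 < μ) (hα : 0 < α) (hβ : 0 < β)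
    {y u : ℝ} (hy : 0 < y) (hu : 0 < u) (k : ℕ) :
    |fdTerm l μ α β y u k| ≤ (2 * Real.exp 3 / y) * ((μ * y / 2) ^ β) ^ (k+1) := by
  set e : ℝ := ((k:ℝ)+1) * β with he
  have hk1 : (0:ℝ) < (k:ℝ)+1 := by positivity
  have heps : 0 < e := by positivity
  have hΓ : 0 < Real.Gamma e := Real.Gamma_pos_of_pos heps
  have ha1 : 0 < ((k:ℝ)+1) * α := by positivity
  have hlu : 0 ≤ l * u := by positivity
  have hD : |regGamma (((k : ℝ) + 1) * α) (l * u) - regGamma (((k : ℝ) + 1) * α + α) (l * u)| ≤ 1 := by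
    have h1 := regGamma_le_one (a := ((k:ℝ)+1)*α + α) (u := l*u) (by positivity) hlu
    have h2 := regGamma_nonneg (a := ((k:ℝ)+1)*α) (u := l*u) ha1 hlu
    have h3 := regGamma_le_one (a := ((k:ℝ)+1)*α) (u := l*u) ha1 hlu
    have h4 := regGamma_nonneg (a := ((k:ℝ)+1)*α + α) (u := l*u) (by positivity) hlu
    rw [abs_le]; constructor <;> linarith
  have hA : 0 ≤ μ ^ e * y ^ (e - 1) / Real.Gamma e := by positivity
  have habs : |fdTerm l μ α β y u k| ≤ μ ^ e * y ^ (e - 1) / Real.Gamma e := by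
    rw [fdTerm, abs_mul]
    calc |μ ^ e * y ^ (e-1) / Real.Gamma e| * |_| ≤ (μ ^ e * y ^ (e - 1) / Real.Gamma e) * 1 := by
          rw [abs_of_nonneg hA]
          exact mul_le_mul_of_nonneg_left hD hA
      _ = μ ^ e * y ^ (e - 1) / Real.Gamma e := mul_one _
  refine habs.trans ?_
  have hbd : μ ^ e * y ^ (e - 1) / Real.Gamma e
      ≤ μ ^ e * y ^ (e - 1) * (Real.exp 3 * (2:ℝ) ^ (1 - e)) := by
    rw [div_eq_mul_one_div]
    exact mul_le_mul_of_nonneg_left (one_div_Gamma_le heps) (by positivity)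
  refine hbd.trans (le_of_eq ?_)
  have h5 : ((μ * y / 2) ^ β : ℝ) ^ (k+1) = (μ * y / 2) ^ e := by
    rw [← Real.rpow_natCast ((μ * y / 2) ^ β) (k+1), ← Real.rpow_mul (by positivity)]
    congr 1
    push_cast; rw [he]; ring
  rw [h5]
  rw [show μ * y / 2 = (μ * y)/2 by ring, Real.div_rpow (by positivity) (by norm_num),
    Real.mul_rpow hμ.le hy.le, Real.rpow_sub_one hy.ne' e,
    Real.rpow_sub (by norm_num : (0:ℝ) < 2), Real.rpow_one]
  have h2e : ((2:ℝ) ^ e) ≠ 0 := (Real.rpow_pos_of_pos (by norm_num) _).ne'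
  field_simp

lemma fdSum_bounds {l μ α β : ℝ} (hl : 0 < l) (hμ : 0 < μ) (hα : 0 < α) (hβ : 0 < β)
    {y u : ℝ} (hy : 0 < y) (hu : 0 < u) (hq : (μ * y / 2) ^ β < 1) :
    Summable (fdTerm l μ α β y u) ∧
    |∑' k, fdTerm l μ α β y u k|
      ≤ 2 * Real.exp 3 * (μ/2) ^ β * y ^ (β-1) / (1 - (μ * y / 2) ^ β) ∧
    |(∑' k, fdTerm l μ α β y u k) - fdTerm l μ α β y u 0|
      ≤ 2 * Real.exp 3 * ((μ/2) ^ β) ^ 2 * (y ^ (β-1) * y ^ β) / (1 - (μ * y / 2) ^ β) := by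
  set q := ((μ * y / 2) ^ β : ℝ) with hqdef
  have hq0 : 0 ≤ q := Real.rpow_nonneg (by positivity) _
  set C := 2 * Real.exp 3 / y with hCdef
  have hC : 0 < C := by positivity
  have hqsplit : q = (μ/2) ^ β * y ^ β := by
    rw [hqdef, show μ * y / 2 = (μ/2) * y by ring, Real.mul_rpow (by positivity) hy.le]
  have hyβ : y ^ (β - 1) = y ^ β / y := Real.rpow_sub_one hy.ne' β
  have hgeom : Summable (fun k : ℕ => C * q ^ (k+1)) := by
    refine ((summable_geometric_of_lt_one hq0 hq).mul_left (C * q)).congr fun k => by ring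
  have hbd : ∀ k, ‖fdTerm l μ α β y u k‖ ≤ C * q ^ (k+1) := fun k => by
    rw [Real.norm_eq_abs]; exact fdTerm_abs_le hl hμ hα hβ hy hu k
  have hsumm : Summable (fdTerm l μ α β y u) := Summable.of_norm_bounded hgeom hbd
  have h1mq : 0 < 1 - q := by linarith
  refine ⟨hsumm, ?_, ?_⟩
  · have hfull : |∑' k, fdTerm l μ α β y u k| ≤ C * q * (1-q)⁻¹ := by
      have hgs : HasSum (fun k : ℕ => C * q ^ (k+1)) (C * q * (1-q)⁻¹) := by
        refine ((hasSum_geometric_of_lt_one hq0 hq).mul_left (C * q)).congr_fun fun k => by ring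
      rw [← Real.norm_eq_abs]
      exact tsum_of_norm_bounded hgs hbd
    refine hfull.trans (le_of_eq ?_)
    rw [hqsplit, hyβ]
    ring
  · have hshift : (∑' k, fdTerm l μ α β y u k) - fdTerm l μ α β y u 0
        = ∑' k : ℕ, fdTerm l μ α β y u (k+1) := by
      rw [Summable.tsum_eq_zero_add hsumm]; ring
    rw [hshift]
    have hgs2 : HasSum (fun k : ℕ => C * q ^ (k+2)) (C * q^2 * (1-q)⁻¹) := by
      refine ((hasSum_geometric_of_lt_one hq0 hq).mul_left (C * q^2)).congr_fun fun k => by ring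
    have htail : |∑' k : ℕ, fdTerm l μ α β y u (k+1)| ≤ C * q^2 * (1-q)⁻¹ := by
      rw [← Real.norm_eq_abs]
      exact tsum_of_norm_bounded hgs2 (fun k => by
        have := hbd (k+1); simpa using this)
    refine htail.trans (le_of_eq ?_)
    rw [hqsplit, hyβ]
    ring

/-- behaviour of the forward density `f(x,t|c)` as `x ↑ ct`. -/
theorem forward_density_limit_at_ct (c v l μ α β t : ℝ)
    (hc : 0 < c) (hv : 0 < v) (hl : 0 < l) (hμ : 0 < μ)
    (hα : 0 < α) (hβ : 0 < β) (ht : 0 < t)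
    (f : ℝ → ℝ)
    (hf : ∀ x, f x = (1 / (c + v)) * Real.exp (-μ * ((c * t - x) / (c + v))) *
      ∑' k : ℕ,
        μ ^ (((k : ℝ) + 1) * β) * ((c * t - x) / (c + v)) ^ (((k : ℝ) + 1) * β - 1) /
            Real.Gamma (((k : ℝ) + 1) * β) *
          (regGamma (((k : ℝ) + 1) * α) (l * ((v * t + x) / (c + v))) -
            regGamma (((k : ℝ) + 1) * α + α) (l * ((v * t + x) / (c + v))))) :
    (β < 1 → Tendsto f (nhdsWithin (c * t) (Set.Ioo (-v * t) (c * t))) atTop) ∧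
    (β = 1 → Tendsto f (nhdsWithin (c * t) (Set.Ioo (-v * t) (c * t)))
      (nhds ((μ / (c + v)) * (regGamma α (l * t) - regGamma (2 * α) (l * t))))) ∧
    (1 < β → Tendsto f (nhdsWithin (c * t) (Set.Ioo (-v * t) (c * t))) (nhds 0)) := by
  have hcv : (0:ℝ) < c + v := by linarith
  set F := nhdsWithin (c*t) (Set.Ioo (-v*t) (c*t)) with hFdef
  set Y : ℝ → ℝ := fun x => (c*t - x)/(c+v) with hYdef
  set U : ℝ → ℝ := fun x => (v*t + x)/(c+v) with hUdef
  have hfY : ∀ x, f x = (1/(c+v)) * Real.exp (-μ * Y x)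
      * ∑' k, fdTerm l μ α β (Y x) (U x) k := by
    intro x; rw [hf x]; rfl
  have hmem : ∀ᶠ x in F, x ∈ Set.Ioo (-v*t) (c*t) := eventually_mem_nhdsWithin
  have hYlt : ∀ᶠ x in F, 0 < Y x ∧ Y x < t := by
    filter_upwards [hmem] with x hx
    refine ⟨div_pos (by linarith [hx.2]) hcv, ?_⟩
    rw [hYdef]
    rw [div_lt_iff₀ hcv]
    nlinarith [hx.1]
  have hUlt : ∀ᶠ x in F, 0 < U x := by
    filter_upwards [hmem] with x hx
    exact div_pos (by linarith [hx.1]) hcv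
  have hYt : Tendsto Y F (nhds 0) := by
    have hcont : Continuous Y := by rw [hYdef]; fun_prop
    have h0 : Y (c*t) = 0 := by rw [hYdef]; simp
    exact (h0 ▸ hcont.tendsto (c*t)).mono_left nhdsWithin_le_nhds
  have hUt : Tendsto U F (nhds t) := by
    have hcont : Continuous U := by rw [hUdef]; fun_prop
    have h0 : U (c*t) = t := by rw [hUdef]; field_simp; ring
    exact (h0 ▸ hcont.tendsto (c*t)).mono_left nhdsWithin_le_nhds
  have hqt : Tendsto (fun x => (μ * Y x / 2) ^ β) F (nhds 0) := by
    have hc0 : ContinuousAt (fun z : ℝ => z ^ β) 0 :=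
      Real.continuousAt_rpow_const 0 β (Or.inr hβ.le)
    have h1 : Tendsto (fun x => μ * Y x / 2) F (nhds 0) := by
      have := (hYt.const_mul μ).div_const 2
      simpa using this
    have := hc0.tendsto.comp h1
    simpa [Real.zero_rpow hβ.ne', Function.comp_def] using this
  have hq1 : ∀ᶠ x in F, (μ * Y x / 2) ^ β < 1 := hqt.eventually_lt_const zero_lt_one
  have hDcont : Tendsto (fun x => regGamma α (l * U x) - regGamma (α+α) (l * U x))
      F (nhds (regGamma α (l*t) - regGamma (α+α) (l*t))) := by
    have h1 : Tendsto (fun x => l * U x) F (nhds (l*t)) := hUt.const_mul l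
    exact ((regGamma_continuousAt hα (by positivity)).tendsto.comp h1).sub
      ((regGamma_continuousAt (by linarith : (0:ℝ) < α + α) (by positivity)).tendsto.comp h1)
  have hinv : Tendsto (fun x => (1 - (μ * Y x / 2) ^ β)⁻¹) F (nhds 1) := by
    have h1 : Tendsto (fun x => 1 - (μ * Y x / 2) ^ β) F (nhds 1) := by
      have := (tendsto_const_nhds (α := ℝ) (x := (1:ℝ)) (f := F)).sub hqt
      simpa using this
    have := h1.inv₀ (by norm_num : (1:ℝ) ≠ 0)
    simpa using this
  have hAbs : ∀ᶠ x in F, |(1/(c+v)) * Real.exp (-μ * Y x)| ≤ 1/(c+v) := by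
    filter_upwards [hYlt] with x hx
    rw [abs_of_pos (by positivity)]
    have h1 : Real.exp (-μ * Y x) ≤ 1 := by
      rw [← Real.exp_zero]
      exact Real.exp_le_exp.2 (by nlinarith [hx.1])
    exact mul_le_of_le_one_right (by positivity) h1
  refine ⟨?_, ?_, ?_⟩
  · -- β < 1
    intro hβ1
    have hDpos : 0 < regGamma α (l*t) - regGamma (α+α) (l*t) :=
      sub_pos.2 (regGamma_lt hα (by positivity))
    have hΓβ : 0 < Real.Gamma β := Real.Gamma_pos_of_pos hβ
    have hmpos : 0 < μ ^ β * (regGamma α (l*t) - regGamma (α+α) (l*t)) / Real.Gamma β := by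
      have := Real.rpow_pos_of_pos hμ β
      positivity
    set m := μ ^ β * (regGamma α (l*t) - regGamma (α+α) (l*t)) / Real.Gamma β with hm
    have hYβ0 : Tendsto (fun x => (Y x) ^ β) F (nhds 0) := by
      have hc0 : ContinuousAt (fun z : ℝ => z ^ β) 0 :=
        Real.continuousAt_rpow_const 0 β (Or.inr hβ.le)
      have := hc0.tendsto.comp hYt
      simpa [Real.zero_rpow hβ.ne', Function.comp_def] using this
    have hBt : Tendsto (fun x =>
        μ ^ β * (regGamma α (l*U x) - regGamma (α+α) (l*U x)) / Real.Gamma β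
        - 2*Real.exp 3*((μ/2)^β)^2 * ((Y x)^β * (1 - (μ * Y x/2)^β)⁻¹)) F (nhds m) := by
      have h1 := (hDcont.const_mul (μ^β)).div_const (Real.Gamma β)
      have h2 := (hYβ0.mul hinv).const_mul (2*Real.exp 3*((μ/2)^β)^2)
      have h3 := h1.sub h2
      norm_num at h3
      exact h3
    have hBev : ∀ᶠ x in F,
        m/2 < μ ^ β * (regGamma α (l*U x) - regGamma (α+α) (l*U x)) / Real.Gamma β
        - 2*Real.exp 3*((μ/2)^β)^2 * ((Y x)^β * (1 - (μ * Y x/2)^β)⁻¹) :=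
      hBt.eventually_const_lt (by linarith)
    have hlow : ∀ᶠ x in F,
        (1/(c+v)) * Real.exp (-μ*t) * (m/2) * (Y x) ^ (β-1) ≤ f x := by
      filter_upwards [hYlt, hUlt, hq1, hBev] with x hx hu0 hq hB
      obtain ⟨hy0, hyt⟩ := hx
      obtain ⟨hsm, hfull, htail⟩ := fdSum_bounds hl hμ hα hβ hy0 hu0 hq
      have hq0 : (0:ℝ) ≤ (μ * Y x/2)^β :=
        Real.rpow_nonneg (div_nonneg (mul_nonneg hμ.le hy0.le) (by norm_num)) _
      have h1mq : 0 < 1 - (μ * Y x/2)^β := by linarith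
      have hS1 : fdTerm l μ α β (Y x) (U x) 0
          - 2*Real.exp 3*((μ/2)^β)^2*((Y x)^(β-1)*(Y x)^β)/(1 - (μ*Y x/2)^β)
          ≤ ∑' k, fdTerm l μ α β (Y x) (U x) k := by
        have := (abs_le.1 htail).1
        linarith
      have hterm0 : fdTerm l μ α β (Y x) (U x) 0
          = (Y x)^(β-1) * (μ^β * (regGamma α (l*U x) - regGamma (α+α) (l*U x)) / Real.Gamma β) := by
        rw [fdTerm_zero]; ring
      have hyb : (0:ℝ) ≤ (Y x)^(β-1) := Real.rpow_nonneg hy0.le _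
      have heq : 2*Real.exp 3*((μ/2)^β)^2*((Y x)^(β-1)*(Y x)^β)/(1-(μ*Y x/2)^β)
          = (Y x)^(β-1) * (2*Real.exp 3*((μ/2)^β)^2*((Y x)^β*(1-(μ*Y x/2)^β)⁻¹)) := by
        field_simp
      have hS2 : (Y x)^(β-1) * (m/2) ≤ ∑' k, fdTerm l μ α β (Y x) (U x) k := by
        refine le_trans ?_ hS1
        rw [hterm0, heq, ← mul_sub]
        exact mul_le_mul_of_nonneg_left (le_of_lt hB) hyb
      rw [hfY x]
      have hA1 : Real.exp (-μ * t) ≤ Real.exp (-μ * Y x) :=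
        Real.exp_le_exp.2 (by nlinarith)
      have hSnn : 0 ≤ ∑' k, fdTerm l μ α β (Y x) (U x) k :=
        le_trans (by positivity) hS2
      calc (1/(c+v)) * Real.exp (-μ*t) * (m/2) * (Y x)^(β-1)
          = (1/(c+v)) * Real.exp (-μ*t) * ((Y x)^(β-1) * (m/2)) := by ring
        _ ≤ (1/(c+v)) * Real.exp (-μ*t) * ∑' k, fdTerm l μ α β (Y x) (U x) k :=
            mul_le_mul_of_nonneg_left hS2 (by positivity)
        _ ≤ (1/(c+v)) * Real.exp (-μ * Y x) * ∑' k, fdTerm l μ α β (Y x) (U x) k := by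
            refine mul_le_mul_of_nonneg_right ?_ hSnn
            exact mul_le_mul_of_nonneg_left hA1 (by positivity)
    have hYin : Tendsto Y F (nhdsWithin 0 (Ioi 0)) :=
      tendsto_nhdsWithin_of_tendsto_nhds_of_eventually_within _ hYt
        (hYlt.mono fun x h => h.1)
    have hrpow : Tendsto (fun z : ℝ => z ^ (β-1)) (nhdsWithin 0 (Ioi (0:ℝ))) atTop := by
      have h1 : Tendsto (fun z : ℝ => (z⁻¹) ^ (1-β)) (nhdsWithin 0 (Ioi (0:ℝ))) atTop :=
        (tendsto_rpow_atTop (by linarith)).comp tendsto_inv_nhdsGT_zero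
      refine h1.congr' ?_
      filter_upwards [self_mem_nhdsWithin] with z hz
      rw [Real.inv_rpow (le_of_lt hz), ← Real.rpow_neg (le_of_lt hz), neg_sub]
    have hdiv : Tendsto (fun x => (Y x) ^ (β-1)) F atTop := hrpow.comp hYin
    have hfin := hdiv.const_mul_atTop
      (by positivity : (0:ℝ) < (1/(c+v)) * Real.exp (-μ*t) * (m/2))
    exact tendsto_atTop_mono' F hlow hfin
  · -- β = 1
    intro hβ1; subst hβ1
    have hterm0 : ∀ y u : ℝ, fdTerm l μ α 1 y u 0
        = μ * (regGamma α (l*u) - regGamma (α+α) (l*u)) := by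
      intro y u
      rw [fdTerm_zero, show (1:ℝ)-1 = 0 by norm_num, Real.rpow_zero, Real.rpow_one,
        Real.Gamma_one]
      ring
    have hexp : Tendsto (fun x => Real.exp (-μ * Y x)) F (nhds 1) := by
      have h0 : Tendsto (fun x => -μ * Y x) F (nhds 0) := by
        simpa using hYt.const_mul (-μ)
      have := (Real.continuous_exp.tendsto 0).comp h0
      simpa [Function.comp_def] using this
    have hmainT : Tendsto (fun x => (1/(c+v)) * Real.exp (-μ * Y x)
        * (μ * (regGamma α (l*U x) - regGamma (α+α) (l*U x)))) F
        (nhds ((μ/(c+v)) * (regGamma α (l*t) - regGamma (2*α) (l*t)))) := by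
      have h1 := (tendsto_const_nhds (α := ℝ) (x := 1/(c+v)) (f := F)).mul hexp
      have h2 := h1.mul (hDcont.const_mul μ)
      have heq : (1/(c+v)) * 1 * (μ * (regGamma α (l*t) - regGamma (α+α) (l*t)))
          = (μ/(c+v)) * (regGamma α (l*t) - regGamma (2*α) (l*t)) := by
        rw [two_mul]; ring
      rw [heq] at h2
      exact h2
    have hrest : Tendsto (fun x => f x - (1/(c+v)) * Real.exp (-μ * Y x)
        * (μ * (regGamma α (l*U x) - regGamma (α+α) (l*U x)))) F (nhds 0) := by
      apply squeeze_zero_norm' (a := fun x =>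
        (1/(c+v)) * (2*Real.exp 3*((μ/2)^(1:ℝ))^2*((Y x)^((1:ℝ)-1)*(Y x)^(1:ℝ))/(1-(μ*Y x/2)^(1:ℝ))))
      · filter_upwards [hYlt, hUlt, hq1, hAbs] with x hx hu0 hq hA
        obtain ⟨hsm, hfull, htail⟩ := fdSum_bounds hl hμ hα one_pos hx.1 hu0 hq
        have hq0 : (0:ℝ) ≤ (μ * Y x/2)^(1:ℝ) :=
          Real.rpow_nonneg (div_nonneg (mul_nonneg hμ.le hx.1.le) (by norm_num)) _
        have h1mq : 0 < 1 - (μ * Y x/2)^(1:ℝ) := by linarith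
        have hfx : f x - (1/(c+v)) * Real.exp (-μ * Y x)
              * (μ * (regGamma α (l*U x) - regGamma (α+α) (l*U x)))
            = (1/(c+v)) * Real.exp (-μ * Y x)
              * ((∑' k, fdTerm l μ α 1 (Y x) (U x) k) - fdTerm l μ α 1 (Y x) (U x) 0) := by
          rw [hfY x, hterm0]; ring
        rw [hfx, Real.norm_eq_abs, abs_mul]
        have hb : (0:ℝ) ≤ 2*Real.exp 3*((μ/2)^(1:ℝ))^2*((Y x)^((1:ℝ)-1)*(Y x)^(1:ℝ))/(1-(μ*Y x/2)^(1:ℝ)) := by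
          have h1 := Real.rpow_nonneg (show (0:ℝ) ≤ μ/2 by positivity) (1:ℝ)
          have h2 := Real.rpow_nonneg hx.1.le ((1:ℝ)-1)
          have h3 := Real.rpow_nonneg hx.1.le (1:ℝ)
          positivity
        exact mul_le_mul hA htail (abs_nonneg _) (by positivity)
      · have hnum : Tendsto (fun x => 2*Real.exp 3*((μ/2)^(1:ℝ))^2*((Y x)^((1:ℝ)-1)*(Y x)^(1:ℝ)))
            F (nhds 0) := by
          have heq : ∀ x, 2*Real.exp 3*((μ/2)^(1:ℝ))^2*((Y x)^((1:ℝ)-1)*(Y x)^(1:ℝ))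
              = 2*Real.exp 3*((μ/2)^(1:ℝ))^2 * Y x := by
            intro x
            rw [show ((1:ℝ)-1) = 0 by norm_num]
            simp only [Real.rpow_zero, Real.rpow_one, one_mul]
          have h0 : Tendsto (fun x => 2*Real.exp 3*((μ/2)^(1:ℝ))^2 * Y x) F (nhds 0) := by
            simpa using hYt.const_mul (2*Real.exp 3*((μ/2)^(1:ℝ))^2)
          exact Tendsto.congr (fun x => (heq x).symm) h0
        have hden : Tendsto (fun x => 1 - (μ * Y x / 2)^(1:ℝ)) F (nhds 1) := by
          have := (tendsto_const_nhds (α := ℝ) (x := (1:ℝ)) (f := F)).sub hqt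
          simpa using this
        have h3 := (hnum.div hden (by norm_num : (1:ℝ) ≠ 0)).const_mul (1/(c+v))
        simpa using h3
    have hsum := hmainT.add hrest
    rw [add_zero] at hsum
    refine hsum.congr fun x => by ring
  · -- 1 < β
    intro hβ1
    apply squeeze_zero_norm' (a := fun x =>
      (1/(c+v)) * (2*Real.exp 3*(μ/2)^β*(Y x)^(β-1)/(1-(μ*Y x/2)^β)))
    · filter_upwards [hYlt, hUlt, hq1, hAbs] with x hx hu0 hq hA
      obtain ⟨hsm, hfull, htail⟩ := fdSum_bounds hl hμ hα hβ hx.1 hu0 hq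
      have hq0 : (0:ℝ) ≤ (μ * Y x/2)^β :=
        Real.rpow_nonneg (div_nonneg (mul_nonneg hμ.le hx.1.le) (by norm_num)) _
      have h1mq : 0 < 1 - (μ * Y x/2)^β := by linarith
      rw [hfY x, Real.norm_eq_abs, abs_mul]
      have hb : (0:ℝ) ≤ 2*Real.exp 3*(μ/2)^β*(Y x)^(β-1)/(1-(μ*Y x/2)^β) := by
        have h1 := Real.rpow_nonneg (show (0:ℝ) ≤ μ/2 by positivity) β
        have h2 := Real.rpow_nonneg hx.1.le (β-1)
        positivity
      exact mul_le_mul hA hfull (abs_nonneg _) (by positivity)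
    · have hYβ0 : Tendsto (fun x => (Y x) ^ (β-1)) F (nhds 0) := by
        have hc0 : ContinuousAt (fun z : ℝ => z ^ (β-1)) 0 :=
          Real.continuousAt_rpow_const 0 (β-1) (Or.inr (by linarith))
        have := hc0.tendsto.comp hYt
        simpa [Real.zero_rpow (show β-1 ≠ 0 by intro h; linarith [h]), Function.comp_def] using this
      have hnum : Tendsto (fun x => 2*Real.exp 3*(μ/2)^β*(Y x)^(β-1)) F (nhds 0) := by
        simpa using hYβ0.const_mul (2*Real.exp 3*(μ/2)^β)
      have hden : Tendsto (fun x => 1 - (μ * Y x / 2)^β) F (nhds 1) := by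
        have := (tendsto_const_nhds (α := ℝ) (x := (1:ℝ)) (f := F)).sub hqt
        simpa using this
      have h3 := (hnum.div hden (by norm_num : (1:ℝ) ≠ 0)).const_mul (1/(c+v))
      simpa using h3
end

section
/- Let N be a Poisson process with rate λ and let T_n denote its arrival times. If N'_t counts the renewals of a process whose inter-renewal times are Erlang(λ, n) (sums of n exponentials), then E[(−1)^{N'_s}] = 1 − 2 e^{-λs} Σ_{k=0}^∞ Σ_{j=2nk+n}^{2nk+2n−1} (λs)^j / j!. -/
open MeasureTheory ProbabilityTheory Real

/-- The `m`-th renewal time `T_m = X_1 + ... + X_m`. -/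
noncomputable def renewalTime {Ω : Type*} (X : ℕ → Ω → ℝ) (m : ℕ) (ω : Ω) : ℝ :=
  ∑ i ∈ Finset.range m, X i ω

/-- The renewal counting process `N'_t = Σ_{m ≥ 1} 1_{T'_m ≤ t}`. -/
noncomputable def renewalCount {Ω : Type*} (X : ℕ → Ω → ℝ) (t : ℝ) (ω : Ω) : ℕ :=
  Set.ncard {m : ℕ | renewalTime X (m + 1) ω ≤ t}

lemma beta_nat (b a : ℕ) (t : ℝ) :
    ∫ x in (0:ℝ)..t, x ^ a * (t - x) ^ b =
      (a.factorial : ℝ) * b.factorial / (a + b + 1).factorial * t ^ (a + b + 1) := by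
  induction b generalizing a with
  | zero =>
    simp only [pow_zero, mul_one, Nat.add_zero, Nat.factorial_zero, Nat.cast_one]
    rw [integral_pow, Nat.factorial_succ]
    push_cast
    rw [zero_pow (Nat.succ_ne_zero a)]
    have h1 : ((a:ℝ)+1) ≠ 0 := by positivity
    have h2 : (a.factorial:ℝ) ≠ 0 := by positivity
    field_simp
    ring
  | succ b ih =>
    have key : ∀ x : ℝ, HasDerivAt (fun y : ℝ => y ^ (a+1) / (a+1) * (t - y) ^ (b+1))
        (x ^ a * (t - x) ^ (b+1) - ((b:ℝ)+1)/((a:ℝ)+1) * (x ^ (a+1) * (t - x) ^ b)) x := by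
      intro x
      have h1 : HasDerivAt (fun y : ℝ => y ^ (a+1) / (a+1)) (x ^ a) x := by
        have := (hasDerivAt_pow (a+1) x).div_const ((a:ℝ)+1)
        simpa using this.congr_deriv (by field_simp; simp)
      have h2 : HasDerivAt (fun y : ℝ => (t - y) ^ (b+1))
          (-(((b:ℝ)+1) * (t - x) ^ b)) x := by
        have hb : HasDerivAt (fun y : ℝ => t - y) (-1) x :=
          (hasDerivAt_id x).const_sub t
        have := (hasDerivAt_pow (b+1) (t - x)).comp x hb
        exact this.congr_deriv (by push_cast; ring)
      have := h1.mul h2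
      refine this.congr_deriv ?_
      field_simp
      ring
    have h0 : (∫ x in (0:ℝ)..t, (x ^ a * (t - x) ^ (b+1) -
        ((b:ℝ)+1)/((a:ℝ)+1) * (x ^ (a+1) * (t - x) ^ b))) = 0 := by
      rw [intervalIntegral.integral_eq_sub_of_hasDerivAt (fun x _ => key x)]
      · simp
      · apply Continuous.intervalIntegrable
        continuity
    have hint1 : IntervalIntegrable (fun x : ℝ => x ^ a * (t - x) ^ (b+1)) volume 0 t :=
      (by continuity : Continuous fun x : ℝ => x ^ a * (t - x) ^ (b+1)).intervalIntegrable _ _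
    have hint2 : IntervalIntegrable (fun x : ℝ => x ^ (a+1) * (t - x) ^ b) volume 0 t :=
      (by continuity : Continuous fun x : ℝ => x ^ (a+1) * (t - x) ^ b).intervalIntegrable _ _
    rw [intervalIntegral.integral_sub hint1 (hint2.const_mul _),
      intervalIntegral.integral_const_mul, sub_eq_zero] at h0
    rw [h0, ih (a+1)]
    have h3 : a + 1 + b + 1 = a + (b + 1) + 1 := by omega
    rw [h3]
    rw [Nat.factorial_succ (a), Nat.factorial_succ b]
    push_cast
    have ha : ((a:ℝ)+1) ≠ 0 := by positivity
    have hf : ((a + (b+1) + 1).factorial : ℝ) ≠ 0 := by positivity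
    field_simp

lemma hasDerivAt_G (l : ℝ) (k : ℕ) (t : ℝ) :
    HasDerivAt (fun t : ℝ => 1 - Real.exp (-(l*t)) * ∑ j ∈ Finset.range (k+1), (l*t)^j / j.factorial)
      (l^(k+1) * t^k * Real.exp (-(l*t)) / k.factorial) t := by
  have hexp : HasDerivAt (fun t : ℝ => Real.exp (-(l*t))) (Real.exp (-(l*t)) * (-l)) t := by
    have h : HasDerivAt (fun t : ℝ => -(l*t)) (-l) t := by
      exact (((hasDerivAt_id t).const_mul l).neg).congr_deriv (by simp)
    exact h.exp
  induction k with
  | zero =>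
    have hfun : (fun t : ℝ => 1 - Real.exp (-(l*t)) * ∑ j ∈ Finset.range 1, (l*t)^j / j.factorial)
        = fun t : ℝ => 1 - Real.exp (-(l*t)) := by
      funext y; simp
    rw [hfun]
    exact (hexp.const_sub 1).congr_deriv (by simp; ring)
  | succ k ih =>
    have hfun : (fun t : ℝ => 1 - Real.exp (-(l*t)) * ∑ j ∈ Finset.range (k+1+1), (l*t)^j / j.factorial)
        = fun t : ℝ => (1 - Real.exp (-(l*t)) * ∑ j ∈ Finset.range (k+1), (l*t)^j / j.factorial)
            - Real.exp (-(l*t)) * ((l*t)^(k+1) / (k+1).factorial) := by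
      funext y; rw [Finset.sum_range_succ]; ring
    rw [hfun]
    have hpow : HasDerivAt (fun t : ℝ => (l*t)^(k+1)) ((((k:ℝ)+1) * (l*t)^k) * l) t := by
      have hm : HasDerivAt (fun t : ℝ => l*t) l t := by
        simpa using (hasDerivAt_id t).const_mul l
      have := (hasDerivAt_pow (k+1) (l*t)).comp t hm
      exact this.congr_deriv (by push_cast; ring)
    have h2 : HasDerivAt (fun t : ℝ => Real.exp (-(l*t)) * ((l*t)^(k+1) / (k+1).factorial))
        ((Real.exp (-(l*t)) * (-l)) * ((l*t)^(k+1) / (k+1).factorial)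
          + Real.exp (-(l*t)) * (((((k:ℝ)+1) * (l*t)^k) * l) / (k+1).factorial)) t := by
      have := hexp.mul (hpow.div_const ((k+1).factorial : ℝ))
      exact this.congr_deriv (by ring)
    refine (ih.sub h2).congr_deriv ?_
    rw [Nat.factorial_succ]
    have hk : (k.factorial : ℝ) ≠ 0 := by positivity
    have hk1 : ((k:ℝ)+1) ≠ 0 := by positivity
    push_cast
    field_simp
    ring

lemma G_integral (l : ℝ) (k : ℕ) (t : ℝ) :
    ∫ x in (0:ℝ)..t, l^(k+1) * x^k * Real.exp (-(l*x)) / k.factorial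
      = 1 - Real.exp (-(l*t)) * ∑ j ∈ Finset.range (k+1), (l*t)^j / j.factorial := by
  rw [intervalIntegral.integral_eq_sub_of_hasDerivAt (fun x _ => hasDerivAt_G l k x)
    (Continuous.intervalIntegrable (by continuity) _ _)]
  have h0 : ∑ j ∈ Finset.range (k+1), ((0:ℝ))^j / j.factorial = 1 := by
    rw [Finset.sum_eq_single 0]
    · simp
    · intro b _ hb; simp [zero_pow hb]
    · simp
  simp [h0]

lemma conv_step (l : ℝ) (m k : ℕ) (t : ℝ) :
    (∫ x in (0:ℝ)..t,
      (1 - Real.exp (-(l*(t-x))) * ∑ j ∈ Finset.range k, (l*(t-x))^j / j.factorial)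
        * (l^(m+1) * x^m * Real.exp (-(l*x)) / m.factorial))
    = 1 - Real.exp (-(l*t)) * ∑ j ∈ Finset.range (k+(m+1)), (l*t)^j / j.factorial := by
  have hfun : ∀ x : ℝ,
      (1 - Real.exp (-(l*(t-x))) * ∑ j ∈ Finset.range k, (l*(t-x))^j / j.factorial)
        * (l^(m+1) * x^m * Real.exp (-(l*x)) / m.factorial)
      = l^(m+1) * x^m * Real.exp (-(l*x)) / m.factorial
        - ∑ j ∈ Finset.range k,
            (Real.exp (-(l*t)) * l^(j+m+1) / (j.factorial * m.factorial)) * (x^m * (t-x)^j) := by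
    intro x
    have he : Real.exp (-(l*(t-x))) * Real.exp (-(l*x)) = Real.exp (-(l*t)) := by
      rw [← Real.exp_add]; ring_nf
    have hsum : ∑ j ∈ Finset.range k,
        (Real.exp (-(l*t)) * l^(j+m+1) / (j.factorial * m.factorial)) * (x^m * (t-x)^j)
        = (∑ j ∈ Finset.range k, (l*(t-x))^j / j.factorial)
            * (Real.exp (-(l*(t-x))) * (l^(m+1) * x^m * Real.exp (-(l*x)) / m.factorial)) := by
      rw [Finset.sum_mul]
      apply Finset.sum_congr rfl
      intro j _
      rw [← he, mul_pow]
      ring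
    rw [hsum]
    ring
  rw [intervalIntegral.integral_congr (fun x _ => hfun x)]
  have hint1 : IntervalIntegrable (fun x : ℝ => l^(m+1) * x^m * Real.exp (-(l*x)) / m.factorial) volume 0 t :=
    Continuous.intervalIntegrable (by continuity) _ _
  have hint2 : ∀ j : ℕ, IntervalIntegrable
      (fun x : ℝ => (Real.exp (-(l*t)) * l^(j+m+1) / (j.factorial * m.factorial)) * (x^m * (t-x)^j)) volume 0 t :=
    fun j => Continuous.intervalIntegrable (by continuity) _ _
  have hsumint : IntervalIntegrable (fun x : ℝ => ∑ j ∈ Finset.range k,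
      (Real.exp (-(l*t)) * l^(j+m+1) / (j.factorial * m.factorial)) * (x^m * (t-x)^j)) volume 0 t :=
    (continuous_finset_sum _ (fun j _ => by continuity)).intervalIntegrable _ _
  rw [intervalIntegral.integral_sub hint1 hsumint,
    intervalIntegral.integral_finset_sum (fun j _ => hint2 j)]
  have hterm : ∀ j : ℕ, (∫ x in (0:ℝ)..t,
      (Real.exp (-(l*t)) * l^(j+m+1) / (j.factorial * m.factorial)) * (x^m * (t-x)^j))
      = Real.exp (-(l*t)) * ((l*t)^(m+1+j) / (m+1+j).factorial) := by
    intro j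
    rw [intervalIntegral.integral_const_mul, beta_nat j m t]
    have h1 : (m.factorial : ℝ) ≠ 0 := by positivity
    have h2 : (j.factorial : ℝ) ≠ 0 := by positivity
    have h3 : ((m+j+1).factorial : ℝ) ≠ 0 := by positivity
    have h4 : m + j + 1 = m + 1 + j := by omega
    rw [mul_pow, h4] at *
    field_simp
    ring
  rw [Finset.sum_congr rfl (fun j _ => hterm j), G_integral l m t, ← Finset.mul_sum]
  have hsplit : ∑ j ∈ Finset.range (k+(m+1)), (l*t)^j / j.factorial
      = (∑ j ∈ Finset.range (m+1), (l*t)^j / j.factorial)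
        + ∑ j ∈ Finset.range k, (l*t)^(m+1+j) / (m+1+j).factorial := by
    have h5 : ∑ j ∈ Finset.range k, (l*t)^(m+1+j) / (m+1+j).factorial
        = ∑ j ∈ Finset.Ico (m+1) (m+1+k), (l*t)^j / j.factorial := by
      rw [Finset.sum_Ico_eq_sum_range]
      simp
    rw [h5, Finset.range_eq_Ico,
      show k + (m+1) = m+1+k from by omega,
      ← Finset.sum_Ico_consecutive _ (by omega : 0 ≤ m+1) (by omega : m+1 ≤ m+1+k)]
    rw [Finset.range_eq_Ico]
  rw [hsplit]
  ring

/-- G function: the Erlang CDF -/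
noncomputable def Gf (l : ℝ) (k : ℕ) (t : ℝ) : ℝ :=
  if 0 ≤ t then 1 - Real.exp (-(l*t)) * ∑ j ∈ Finset.range k, (l*t)^j / j.factorial else 0

lemma Gf_nonneg {l : ℝ} (hl : 0 < l) (k : ℕ) (t : ℝ) : 0 ≤ Gf l k t := by
  unfold Gf
  split_ifs with h
  · have h1 : ∑ j ∈ Finset.range k, (l*t)^j / j.factorial ≤ Real.exp (l*t) := by
      have := Real.sum_le_exp_of_nonneg (by positivity : (0:ℝ) ≤ l*t) k
      simpa using this
    have h2 : Real.exp (-(l*t)) * ∑ j ∈ Finset.range k, (l*t)^j / j.factorial ≤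
        Real.exp (-(l*t)) * Real.exp (l*t) := by
      apply mul_le_mul_of_nonneg_left h1 (Real.exp_nonneg _)
    rw [← Real.exp_add] at h2
    simp at h2
    linarith
  · exact le_refl _

lemma Gf_le_one {l : ℝ} (hl : 0 < l) (k : ℕ) (t : ℝ) : Gf l k t ≤ 1 := by
  unfold Gf
  split_ifs with h
  · have : 0 ≤ Real.exp (-(l*t)) * ∑ j ∈ Finset.range k, (l*t)^j / j.factorial := by
      apply mul_nonneg (Real.exp_nonneg _)
      apply Finset.sum_nonneg
      intro j _
      positivity
    linarith
  · norm_num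

lemma measurable_Gf (l : ℝ) (k : ℕ) : Measurable (Gf l k) := by
  unfold Gf
  exact Measurable.ite measurableSet_Ici (by fun_prop) measurable_const

lemma integrable_gammaPDFReal {a r : ℝ} (ha : 0 < a) (hr : 0 < r) :
    Integrable (gammaPDFReal a r) := by
  refine ⟨(measurable_gammaPDFReal a r).aestronglyMeasurable, ?_⟩
  rw [hasFiniteIntegral_iff_ofReal (ae_of_all _ (gammaPDFReal_nonneg ha hr))]
  have h1 : ∫⁻ x, ENNReal.ofReal (gammaPDFReal a r x) = 1 := lintegral_gammaPDF_eq_one ha hr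
  rw [h1]
  exact ENNReal.one_lt_top

lemma measurable_renewalTime {Ω : Type*} [MeasurableSpace Ω] (X : ℕ → Ω → ℝ)
    (hmeas : ∀ i, Measurable (X i)) (m : ℕ) : Measurable (renewalTime X m) := by
  unfold renewalTime
  exact Finset.measurable_sum _ (fun i _ => hmeas i)

lemma cdf_renewal {Ω : Type*} [MeasurableSpace Ω]
    (prob : Measure Ω) [IsProbabilityMeasure prob]
    (l : ℝ) (hl : 0 < l) (n' : ℕ)
    (X : ℕ → Ω → ℝ) (hmeas : ∀ i, Measurable (X i))
    (hindep : iIndepFun X prob)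
    (hlaw : ∀ i, Measure.map (X i) prob = gammaMeasure (n'+1) l) :
    ∀ (m : ℕ) (t : ℝ),
      prob {ω | renewalTime X m ω ≤ t} = ENNReal.ofReal (Gf l ((n'+1)*m) t) := by
  set n := n' + 1 with hn
  have hn0 : (0:ℝ) < (n:ℝ) := by positivity
  have hXneg : ∀ i, prob {ω | X i ω < 0} = 0 := by
    intro i
    have : {ω | X i ω < 0} = X i ⁻¹' (Set.Iio 0) := rfl
    rw [this, ← Measure.map_apply (hmeas i) measurableSet_Iio, hlaw i, gammaMeasure,
      withDensity_apply _ measurableSet_Iio, lintegral_gammaPDF_of_nonpos le_rfl]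
  intro m
  induction m with
  | zero =>
    intro t
    have h0 : renewalTime X 0 = fun _ => (0:ℝ) := by funext ω; simp [renewalTime]
    rw [h0]
    unfold Gf
    by_cases ht : 0 ≤ t
    · have : {ω : Ω | (0:ℝ) ≤ t} = Set.univ := by ext ω; simp [ht]
      rw [this, if_pos ht]
      simp
    · have : {ω : Ω | (0:ℝ) ≤ t} = ∅ := by ext ω; simp [ht]
      rw [this, if_neg ht]
      simp
  | succ m ih =>
    intro t
    by_cases ht : 0 ≤ t
    swap
    · -- negative t : probability 0
      have hsub : {ω | renewalTime X (m+1) ω ≤ t} ⊆ ⋃ i, {ω | X i ω < 0} := by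
        intro ω hω
        by_contra hc
        simp only [Set.mem_iUnion, Set.mem_setOf_eq, not_exists, not_lt] at hc
        have : 0 ≤ renewalTime X (m+1) ω := Finset.sum_nonneg (fun i _ => hc i)
        have := hω
        simp only [Set.mem_setOf_eq] at this
        linarith [not_le.mp ht]
      have : prob {ω | renewalTime X (m+1) ω ≤ t} = 0 :=
        measure_mono_null hsub (measure_iUnion_null hXneg)
      rw [this, Gf, if_neg ht, ENNReal.ofReal_zero]
    · -- main case
      have hTm : Measurable (renewalTime X m) := measurable_renewalTime X hmeas m
      have hIndep : IndepFun (renewalTime X m) (X m) prob := by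
        have h := hindep.indepFun_finsetSum_of_notMem hmeas (Finset.notMem_range_self (n := m))
        have heq : (∑ i ∈ Finset.range m, X i) = renewalTime X m := by
          funext ω; rw [Finset.sum_apply]; rfl
        rwa [heq] at h
      have hmap : Measure.map (fun ω => (X m ω, renewalTime X m ω)) prob
          = (gammaMeasure n l).prod (Measure.map (renewalTime X m) prob) := by
        rw [hn, Nat.cast_add, Nat.cast_one, ← hlaw m]
        exact (indepFun_iff_map_prod_eq_prod_map_map (hmeas m).aemeasurable
          hTm.aemeasurable).mp hIndep.symm
      have hSmeas : MeasurableSet {p : ℝ × ℝ | p.1 + p.2 ≤ t} :=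
        measurableSet_le (measurable_fst.add measurable_snd) measurable_const
      have hset : {ω | renewalTime X (m+1) ω ≤ t}
          = (fun ω => (X m ω, renewalTime X m ω)) ⁻¹' {p : ℝ × ℝ | p.1 + p.2 ≤ t} := by
        ext ω
        simp only [Set.mem_setOf_eq, Set.mem_preimage]
        unfold renewalTime
        rw [Finset.sum_range_succ]
        constructor <;> intro h <;> linarith
      rw [hset, ← Measure.map_apply ((hmeas m).prodMk hTm) hSmeas, hmap,
        Measure.prod_apply hSmeas]
      have hslice : ∀ x : ℝ, (Measure.map (renewalTime X m) prob) (Prod.mk x ⁻¹' {p : ℝ × ℝ | p.1 + p.2 ≤ t})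
          = ENNReal.ofReal (Gf l (n*m) (t - x)) := by
        intro x
        have : Prod.mk x ⁻¹' {p : ℝ × ℝ | p.1 + p.2 ≤ t} = Set.Iic (t - x) := by
          ext y; simp only [Set.mem_preimage, Set.mem_setOf_eq, Set.mem_Iic]; constructor <;> intro h <;> linarith
        rw [this, Measure.map_apply hTm measurableSet_Iic]
        exact ih (t - x)
      rw [lintegral_congr hslice]
      -- now the lintegral over the gamma measure
      have hGmeas : Measurable (fun x : ℝ => ENNReal.ofReal (Gf l (n*m) (t - x))) :=
        (((measurable_Gf l (n*m)).comp (measurable_const.sub measurable_id)).ennreal_ofReal)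
      have hpdfmeas : Measurable (gammaPDF n l) :=
        (measurable_gammaPDFReal _ _).ennreal_ofReal
      have hwd : (gammaMeasure (n:ℝ) l) = volume.withDensity (gammaPDF n l) := rfl
      rw [hwd, lintegral_withDensity_eq_lintegral_mul _ hpdfmeas hGmeas]
      have hpt : ∀ x : ℝ, (gammaPDF (n:ℝ) l * fun x => ENNReal.ofReal (Gf l (n*m) (t - x))) x
          = ENNReal.ofReal (Gf l (n*m) (t - x) * gammaPDFReal n l x) := by
        intro x
        simp only [Pi.mul_apply, gammaPDF]
        rw [← ENNReal.ofReal_mul (gammaPDFReal_nonneg hn0 hl x), mul_comm]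
      rw [lintegral_congr hpt]
      have hint : Integrable (fun x : ℝ => Gf l (n*m) (t - x) * gammaPDFReal n l x) := by
        refine Integrable.bdd_mul (integrable_gammaPDFReal hn0 hl) ?_ (c := 1) (ae_of_all _ fun x => ?_)
        · exact ((measurable_Gf l (n*m)).comp (measurable_const.sub measurable_id)).aestronglyMeasurable
        · rw [Real.norm_eq_abs, abs_le]
          exact ⟨by linarith [Gf_nonneg hl (n*m) (t-x)], Gf_le_one hl (n*m) (t-x)⟩
      have hnn : 0 ≤ᵐ[volume] fun x : ℝ => Gf l (n*m) (t - x) * gammaPDFReal n l x :=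
        ae_of_all _ (fun x => mul_nonneg (Gf_nonneg hl _ _) (gammaPDFReal_nonneg hn0 hl x))
      rw [← MeasureTheory.ofReal_integral_eq_lintegral_ofReal hint hnn]
      congr 1
      -- now a real integral computation
      have hind : (fun x : ℝ => Gf l (n*m) (t - x) * gammaPDFReal n l x)
          = (Set.Icc (0:ℝ) t).indicator (fun x => Gf l (n*m) (t - x) * gammaPDFReal n l x) := by
        funext x
        by_cases hx : x ∈ Set.Icc (0:ℝ) t
        · rw [Set.indicator_of_mem hx]
        · rw [Set.indicator_of_notMem hx]
          simp only [Set.mem_Icc, not_and_or, not_le] at hx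
          rcases hx with hx | hx
          · rw [gammaPDFReal, if_neg (not_le.mpr hx), mul_zero]
          · rw [Gf, if_neg (by intro h; linarith), zero_mul]
      rw [hind, integral_indicator measurableSet_Icc, integral_Icc_eq_integral_Ioc,
        ← intervalIntegral.integral_of_le ht]
      have hcong : ∀ x ∈ Set.uIcc (0:ℝ) t, Gf l (n*m) (t - x) * gammaPDFReal n l x
          = (1 - Real.exp (-(l*(t-x))) * ∑ j ∈ Finset.range (n*m), (l*(t-x))^j / j.factorial)
              * (l^(n'+1) * x^n' * Real.exp (-(l*x)) / n'.factorial) := by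
        intro x hx
        rw [Set.uIcc_of_le ht, Set.mem_Icc] at hx
        rw [Gf, if_pos (by linarith [hx.2]), gammaPDFReal, if_pos hx.1]
        congr 1
        simp only [hn, Nat.cast_add, Nat.cast_one]
        rw [Real.Gamma_nat_eq_factorial,
          show ((n':ℝ)+1) = ((n'+1:ℕ):ℝ) by push_cast; ring, Real.rpow_natCast,
          show ((n'+1:ℕ):ℝ) - 1 = ((n':ℕ):ℝ) by push_cast; ring, Real.rpow_natCast]
        push_cast
        ring
      rw [intervalIntegral.integral_congr hcong, conv_step l n' (n*m) t, Gf, if_pos ht,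
        show n*m + (n'+1) = n*(m+1) by rw [hn]; ring]

/-- for i.i.d. Erlang(λ, n) inter-renewal times,
`E[(-1)^{N'_s}] = 1 - 2 e^{-λs} Σ_{k=0}^∞ Σ_{j=2nk+n}^{2nk+2n-1} (λs)^j / j!`. -/
theorem parity_mean_erlang {Ω : Type*} [MeasurableSpace Ω]
    (prob : Measure Ω) [IsProbabilityMeasure prob]
    (l : ℝ) (hl : 0 < l) (n : ℕ) (hn : 0 < n)
    (X : ℕ → Ω → ℝ) (hmeas : ∀ i, Measurable (X i))
    (hindep : iIndepFun X prob)
    (hlaw : ∀ i, Measure.map (X i) prob = gammaMeasure n l)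
    (s : ℝ) (hs : 0 ≤ s) :
    ∫ ω, ((-1 : ℝ)) ^ (renewalCount X s ω) ∂prob =
      1 - 2 * Real.exp (-l * s) *
        ∑' k : ℕ, ∑ j ∈ Finset.Ico (2 * n * k + n) (2 * n * k + 2 * n),
          (l * s) ^ j / (Nat.factorial j) := by
  obtain ⟨n', rfl⟩ : ∃ n', n = n' + 1 := ⟨n - 1, by omega⟩
  set n := n' + 1 with hn'
  -- law of renewal times
  have hlaw' : ∀ i, Measure.map (X i) prob = gammaMeasure ((n':ℝ)+1) l := by
    intro i
    rw [hlaw i]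
    congr 1
    rw [hn']
    push_cast
    ring
  have hcdf := cdf_renewal prob l hl n' X hmeas hindep hlaw' 
  -- basic events
  have hXneg : ∀ i, prob {ω | X i ω < 0} = 0 := by
    intro i
    have h0 : {ω | X i ω < 0} = X i ⁻¹' (Set.Iio 0) := rfl
    rw [h0, ← Measure.map_apply (hmeas i) measurableSet_Iio, hlaw i, gammaMeasure,
      withDensity_apply _ measurableSet_Iio, lintegral_gammaPDF_of_nonpos le_rfl]
  have hTmeas : ∀ m, Measurable (renewalTime X m) := measurable_renewalTime X hmeas
  set G0 : Set Ω := {ω | ∀ i, 0 ≤ X i ω} with hG0def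
  have hG0meas : MeasurableSet G0 := by
    have : G0 = ⋂ i, {ω | 0 ≤ X i ω} := by ext ω; simp [hG0def]
    rw [this]
    exact MeasurableSet.iInter (fun i => measurableSet_le measurable_const (hmeas i))
  have hG0c : prob G0ᶜ = 0 := by
    have : G0ᶜ = ⋃ i, {ω | X i ω < 0} := by
      ext ω; simp [hG0def, not_le]
    rw [this]
    exact measure_iUnion_null hXneg
  have hmono : ∀ ω ∈ G0, Monotone (fun m => renewalTime X m ω) := by
    intro ω hω
    apply monotone_nat_of_le_succ
    intro m
    simp only [renewalTime, Finset.sum_range_succ]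
    have := hω m
    simp only [hG0def, Set.mem_setOf_eq] at hω
    linarith [hω m]
  -- the bad set is null
  set Bad : Set Ω := ⋂ m, {ω | renewalTime X (m+1) ω ≤ s} with hBaddef
  have hBadmeas : MeasurableSet Bad :=
    MeasurableSet.iInter (fun m => measurableSet_le (hTmeas (m+1)) measurable_const)
  have hBad : prob Bad = 0 := by
    have hle : ∀ m : ℕ, prob Bad ≤ ENNReal.ofReal (Gf l (n*(m+1)) s) := by
      intro m
      rw [← hcdf (m+1) s]
      exact measure_mono (Set.iInter_subset _ m)
    have hlim : Filter.Tendsto (fun m : ℕ => Gf l (n*(m+1)) s) Filter.atTop (nhds 0) := by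
      have hsum : Filter.Tendsto (fun k : ℕ => ∑ j ∈ Finset.range k, (l*s)^j / j.factorial)
          Filter.atTop (nhds (Real.exp (l*s))) := by
        rw [Real.exp_eq_exp_ℝ]
        exact (NormedSpace.expSeries_div_hasSum_exp (l*s)).tendsto_sum_nat
      have hcomp : Filter.Tendsto (fun m : ℕ => n*(m+1)) Filter.atTop Filter.atTop := by
        apply Filter.tendsto_atTop_atTop.mpr
        intro b
        exact ⟨b, fun a ha => by nlinarith [hn'.symm ▸ Nat.succ_le_iff.mp (Nat.one_le_iff_ne_zero.mpr (by omega : n ≠ 0))]⟩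
      have : Filter.Tendsto (fun m : ℕ => Gf l (n*(m+1)) s) Filter.atTop
          (nhds (1 - Real.exp (-(l*s)) * Real.exp (l*s))) := by
        have h1 : (fun m : ℕ => Gf l (n*(m+1)) s)
            = fun m : ℕ => 1 - Real.exp (-(l*s)) * ∑ j ∈ Finset.range (n*(m+1)), (l*s)^j / j.factorial := by
          funext m; rw [Gf, if_pos hs]
        rw [h1]
        exact ((hsum.comp hcomp).const_mul _).const_sub 1
      convert this using 2
      rw [← Real.exp_add]
      norm_num
    have := ge_of_tendsto (ENNReal.tendsto_ofReal hlim) (Filter.Eventually.of_forall hle)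
    simpa using this
  -- the partition events
  set A : ℕ → Set Ω := fun k =>
    ({ω | renewalTime X k ω ≤ s ∧ s < renewalTime X (k+1) ω}) ∩ G0 with hAdef
  have hAmeas : ∀ k, MeasurableSet (A k) := by
    intro k
    exact (MeasurableSet.inter
      ((measurableSet_le (hTmeas k) measurable_const).inter
        (measurableSet_lt measurable_const (hTmeas (k+1)))) hG0meas)
  have hAdisj : Pairwise (Function.onFun Disjoint A) := by
    intro i j hij
    rw [Function.onFun, Set.disjoint_left]
    intro ω hωi hωj
    rcases lt_or_gt_of_ne hij with h | h
    · have h1 : renewalTime X (i+1) ω ≤ renewalTime X j ω := hmono ω hωi.2 (by omega)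
      exact absurd (le_trans h1 hωj.1.1) (not_le.mpr hωi.1.2)
    · have h1 : renewalTime X (j+1) ω ≤ renewalTime X i ω := hmono ω hωi.2 (by omega)
      exact absurd (le_trans h1 hωi.1.1) (not_le.mpr hωj.1.2)
  -- identification of the renewal count
  have claim2 : ∀ ω ∈ G0, ∀ k, ω ∈ A k → renewalCount X s ω = k := by
    intro ω hω k hωk
    have hset : {m : ℕ | renewalTime X (m+1) ω ≤ s} = ↑(Finset.range k) := by
      ext m
      simp only [Set.mem_setOf_eq, Finset.coe_range, Set.mem_Iio]
      constructor
      · intro hm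
        by_contra hc
        push_neg at hc
        have : renewalTime X (k+1) ω ≤ renewalTime X (m+1) ω := hmono ω hω (by omega)
        linarith [hωk.1.2]
      · intro hm
        have : renewalTime X (m+1) ω ≤ renewalTime X k ω := hmono ω hω (by omega)
        linarith [hωk.1.1]
    rw [renewalCount, hset, Set.ncard_coe_finset, Finset.card_range]
  have claim1 : ∀ ω, ω ∈ G0 → ω ∉ Bad → ω ∈ A (renewalCount X s ω) := by
    intro ω hω hωb
    have hex : ∃ m, s < renewalTime X (m+1) ω := by
      by_contra hc
      push_neg at hc
      exact hωb (Set.mem_iInter.mpr (fun m => hc m))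
    set K := sInf {m | s < renewalTime X (m+1) ω} with hKdef
    have hK : s < renewalTime X (K+1) ω := Nat.sInf_mem hex
    have hKmem : ω ∈ A K := by
      refine ⟨⟨?_, hK⟩, hω⟩
      rcases Nat.eq_zero_or_pos K with h0 | h0
      · rw [h0]
        simpa [renewalTime] using hs
      · have hlt : K - 1 < K := by omega
        have := Nat.notMem_of_lt_sInf (hKdef ▸ hlt)
        simp only [Set.mem_setOf_eq, not_lt] at this
        have h2 : K - 1 + 1 = K := by omega
        rwa [h2] at this
    have := claim2 ω hω K hKmem
    rwa [this]
  -- the odd set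
  set O : Set Ω := ⋃ k, A (2*k+1) with hOdef
  have hOmeas : MeasurableSet O := MeasurableSet.iUnion (fun k => hAmeas _)
  -- a.e. identification of the integrand
  have hae : (fun ω => ((-1 : ℝ)) ^ (renewalCount X s ω))
      =ᵐ[prob] fun ω => 1 - 2 * Set.indicator O (fun _ => (1:ℝ)) ω := by
    have hGood : ∀ᵐ ω ∂prob, ω ∈ G0 ∧ ω ∉ Bad := by
      rw [ae_iff]
      have : {ω | ¬(ω ∈ G0 ∧ ω ∉ Bad)} ⊆ G0ᶜ ∪ Bad := by
        intro ω hω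
        simp only [Set.mem_setOf_eq, not_and_or, not_not] at hω
        rcases hω with h | h
        · exact Or.inl h
        · exact Or.inr h
      exact measure_mono_null this (by rw [measure_union_null_iff]; exact ⟨hG0c, hBad⟩)
    filter_upwards [hGood] with ω hω
    obtain ⟨hω1, hω2⟩ := hω
    have hA := claim1 ω hω1 hω2
    rcases Nat.even_or_odd (renewalCount X s ω) with hpar | hpar
    · have hnotO : ω ∉ O := by
        intro hωO
        obtain ⟨k, hk⟩ := Set.mem_iUnion.mp hωO
        have h2 := claim2 ω hω1 _ hk
        rcases hpar with ⟨r, hr⟩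
        omega
      rw [Set.indicator_of_notMem hnotO, hpar.neg_one_pow]
      ring
    · have hωO : ω ∈ O := by
        obtain ⟨k, hk⟩ := hpar
        exact Set.mem_iUnion.mpr ⟨k, by rw [show 2*k+1 = renewalCount X s ω by omega]; exact hA⟩
      rw [Set.indicator_of_mem hωO, hpar.neg_one_pow]
      ring
  rw [integral_congr_ae hae]
  -- compute the integral
  have hindint : Integrable (O.indicator (fun _ => (1:ℝ))) prob :=
    (integrable_const (1:ℝ)).indicator hOmeas
  rw [integral_sub (integrable_const 1) (hindint.const_mul 2), integral_const,
    MeasureTheory.integral_const_mul, integral_indicator_const (1:ℝ) hOmeas]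
  simp only [measure_univ, ENNReal.toReal_one, smul_eq_mul, mul_one, one_smul]
  -- measure of O
  have hOsum : prob O = ∑' k, prob (A (2*k+1)) := by
    rw [hOdef]
    exact measure_iUnion (fun i j hij => hAdisj (by omega : 2*i+1 ≠ 2*j+1)) (fun k => hAmeas _)
  -- measure of each A k
  have hAprob : ∀ k, prob (A k)
      = ENNReal.ofReal (Gf l (n*k) s) - ENNReal.ofReal (Gf l (n*(k+1)) s) := by
    intro k
    have hAeq : A k = ({ω | renewalTime X k ω ≤ s} ∩ G0)
        \ ({ω | renewalTime X (k+1) ω ≤ s} ∩ G0) := by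
      ext ω
      constructor
      · rintro ⟨⟨h1, h2⟩, h3⟩
        exact ⟨⟨h1, h3⟩, fun hc => absurd hc.1 (not_le.mpr h2)⟩
      · rintro ⟨⟨h1, h3⟩, h2⟩
        refine ⟨⟨h1, ?_⟩, h3⟩
        by_contra hc
        exact h2 ⟨not_lt.mp hc, h3⟩
    rw [hAeq, measure_diff ?_ ?_ (measure_ne_top _ _)]
    · rw [measure_inter_conull hG0c, measure_inter_conull hG0c, hcdf k s, hcdf (k+1) s]
    · intro ω hω
      exact ⟨le_trans (hmono ω hω.2 (by omega : k ≤ k+1)) hω.1, hω.2⟩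
    · exact ((measurableSet_le (hTmeas (k+1)) measurable_const).inter hG0meas).nullMeasurableSet
  -- Gf is antitone in k
  have hGfmono : ∀ a b : ℕ, a ≤ b → Gf l b s ≤ Gf l a s := by
    intro a b hab
    rw [Gf, Gf, if_pos hs, if_pos hs]
    have h1 : ∑ j ∈ Finset.range a, (l*s)^j / j.factorial
        ≤ ∑ j ∈ Finset.range b, (l*s)^j / j.factorial := by
      apply Finset.sum_le_sum_of_subset_of_nonneg (Finset.range_subset_range.mpr hab)
      intro j _ _
      positivity
    have h2 := mul_le_mul_of_nonneg_left h1 (Real.exp_nonneg (-(l*s)))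
    linarith
  -- value of each term
  have hterm : ∀ k, (prob (A (2*k+1))).toReal
      = Real.exp (-(l*s)) * ∑ j ∈ Finset.Ico (2*n*k+n) (2*n*k+2*n), (l*s)^j / j.factorial := by
    intro k
    rw [hAprob (2*k+1)]
    have hmle : Gf l (n*(2*k+1+1)) s ≤ Gf l (n*(2*k+1)) s :=
      hGfmono _ _ (by nlinarith [hn'.symm])
    rw [← ENNReal.ofReal_sub _ (Gf_nonneg hl (n*(2*k+1+1)) s),
      ENNReal.toReal_ofReal (by linarith)]
    rw [Gf, Gf, if_pos hs, if_pos hs]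
    have hidx1 : n*(2*k+1) = 2*n*k + n := by ring
    have hidx2 : n*(2*k+1+1) = 2*n*k + 2*n := by ring
    rw [hidx1, hidx2,
      Finset.sum_Ico_eq_sub (fun j => (l*s)^j / (j.factorial:ℝ)) (by omega : 2*n*k+n ≤ 2*n*k+2*n)]
    ring
  rw [probReal_univ, measureReal_def, hOsum, ENNReal.tsum_toReal_eq (fun k => measure_ne_top _ _), tsum_congr hterm,
    tsum_mul_left, show (-l*s) = -(l*s) by ring]
  ring
end
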